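/- Let r ≥ 2 and let φ ∈ Σ_r ⊗ Δ_n be a partially pure spinor. Extend the endomorphisms η̂_{kl}^φ to all indices by η̂_{lk}^φ = −η̂_{kl}^φ and η̂_{kk}^φ = 0. Then they satisfy the commutation relations of so(r): [η̂_{kl}^φ, η̂_{ij}^φ] = 0 whenever i, j, k, l ∈ {1,…,r} are pairwise distinct, and [η̂_{ij}^φ, η̂_{jk}^φ] = −η̂_{ik}^φ whenever i, j, k ∈ {1,…,r} are pairwise distinct. -/

import Mathlib

open Complex Matrix
noncomputable section
abbrev Rn (n : ℕ) := EuclideanSpace ℝ (Fin n)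
abbrev SpIdx (n : ℕ) : Type := Fin (n / 2) → Fin 2
abbrev Spinor (n : ℕ) := EuclideanSpace ℂ (SpIdx n)
abbrev TwSpinor (r n : ℕ) := EuclideanSpace ℂ (SpIdx r × SpIdx n)

def g1M : Matrix (Fin 2) (Fin 2) ℂ := !![I, 0; 0, -I]
def g2M : Matrix (Fin 2) (Fin 2) ℂ := !![0, I; I, 0]
def TM : Matrix (Fin 2) (Fin 2) ℂ := !![0, -I; I, 0]

def tensorOp {k : ℕ} (M : Fin k → Matrix (Fin 2) (Fin 2) ℂ) :
    Matrix (Fin k → Fin 2) (Fin k → Fin 2) ℂ :=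
  Matrix.of fun x y => ∏ t, M t (x t) (y t)

def genMat (n : ℕ) (i : ℕ) : Matrix (SpIdx n) (SpIdx n) ℂ :=
  if i < 2 * (n / 2) then
    tensorOp (fun t =>
      if (t : ℕ) < n / 2 - 1 - i / 2 then 1
      else if (t : ℕ) = n / 2 - 1 - i / 2 then (if i % 2 = 0 then g1M else g2M)
      else TM)
  else I • tensorOp (fun _ => TM)

def vecMat (n : ℕ) (X : Rn n) : Matrix (SpIdx n) (SpIdx n) ℂ :=
  ∑ i : Fin n, (X i : ℂ) • genMat n (i : ℕ)

def volMat (n : ℕ) : Matrix (SpIdx n) (SpIdx n) ℂ :=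
  ((List.range n).map (genMat n)).prod

def actN {r n : ℕ} (M : Matrix (SpIdx n) (SpIdx n) ℂ) (φ : TwSpinor r n) : TwSpinor r n :=
  WithLp.toLp 2 (fun p => ∑ b, M p.2 b * φ (p.1, b))

def actR {r n : ℕ} (M : Matrix (SpIdx r) (SpIdx r) ℂ) (φ : TwSpinor r n) : TwSpinor r n :=
  WithLp.toLp 2 (fun p => ∑ a, M p.1 a * φ (a, p.2))

def wedgeMat (n : ℕ) (X Y : Rn n) : Matrix (SpIdx n) (SpIdx n) ℂ :=
  vecMat n X * vecMat n Y + (((inner ℝ X Y : ℝ) : ℂ)) • 1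

def etaM (r n : ℕ) (M : Matrix (SpIdx r) (SpIdx r) ℂ) (φ : TwSpinor r n) (X Y : Rn n) : ℝ :=
  ((inner ℂ (actN (wedgeMat n X Y) (actR M φ)) φ : ℂ)).re

def eta (r n : ℕ) (φ : TwSpinor r n) (k l : ℕ) (X Y : Rn n) : ℝ :=
  etaM r n (genMat r k * genMat r l) φ X Y

def stdBasis (n : ℕ) (i : Fin n) : Rn n := EuclideanSpace.single i 1

def etaActionM (r n : ℕ) (M : Matrix (SpIdx r) (SpIdx r) ℂ) (φ : TwSpinor r n) : TwSpinor r n :=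
  ∑ i : Fin n, ∑ j : Fin n,
    if i < j then
      ((etaM r n M φ (stdBasis n i) (stdBasis n j) : ℝ) : ℂ) • actN (genMat n (i:ℕ) * genMat n (j:ℕ)) φ
    else 0

def InSigma (r n : ℕ) (φ : TwSpinor r n) : Prop :=
  r % 2 = 1 ∨ actR (((-I) ^ (r / 2)) • volMat r) φ = φ

structure IsPartiallyPure (r n : ℕ) (φ : TwSpinor r n) (V : Submodule ℝ (Rn n)) : Prop where
  lt_dim : r < n
  mem_sigma : InSigma r n φ
  unit_norm : ‖φ‖ = 1
  dim_eq : Module.finrank ℝ V = n - r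
  exists_conj : ∀ X ∈ V, ∃ Y ∈ V, actN (vecMat n X) φ = I • actN (vecMat n Y) φ
  eta_plus : ∀ k l : Fin r, k < l →
    etaActionM r n (genMat r (k : ℕ) * genMat r (l : ℕ)) φ
      + actR (genMat r (k : ℕ) * genMat r (l : ℕ)) φ = 0
  f_orth : ∀ k l : Fin r, k < l →
    (inner ℂ (actR (genMat r (k : ℕ) * genMat r (l : ℕ)) φ) φ : ℂ) = 0
  vol_orth : r = 4 → (inner ℂ (actR (volMat r) φ) φ : ℂ) = 0
-- real matrix applied to a Euclidean vector
def mvE {n : ℕ} (M : Matrix (Fin n) (Fin n) ℝ) (x : Rn n) : Rn n := WithLp.toLp 2 (fun i => ∑ j, M i j * x j)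

def etaHatMat (r n : ℕ) (φ : TwSpinor r n) (k l : ℕ) : Matrix (Fin n) (Fin n) ℝ :=
  Matrix.of fun i j => eta r n φ k l (stdBasis n j) (stdBasis n i)

def etaHatExt (r n : ℕ) (φ : TwSpinor r n) (k l : Fin r) : Matrix (Fin n) (Fin n) ℝ :=
  if k = l then 0 else if k < l then etaHatMat r n φ (k : ℕ) (l : ℕ)
  else -(etaHatMat r n φ (l : ℕ) (k : ℕ))

def etaPhi (r n : ℕ) (φ : TwSpinor r n) (C : Matrix (Fin r) (Fin r) ℝ) :
    Matrix (Fin n) (Fin n) ℝ :=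
  ∑ k : Fin r, ∑ l : Fin r, if k < l then C k l • etaHatMat r n φ (k : ℕ) (l : ℕ) else 0

def IsEtaFrame (r n : ℕ) (φ : TwSpinor r n) (V : Submodule ℝ (Rn n)) (v : Fin r → Rn n) : Prop :=
  Orthonormal ℝ v ∧ (∀ k, v k ∈ Vᗮ) ∧
    ∀ k l : Fin r, k < l → ∀ X Y : Rn n,
      eta r n φ (k : ℕ) (l : ℕ) X Y
        = (inner ℝ (v k) X : ℝ) * (inner ℝ (v l) Y : ℝ) - (inner ℝ (v l) X : ℝ) * (inner ℝ (v k) Y : ℝ)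

def IsJ (r n : ℕ) (φ : TwSpinor r n) (V : Submodule ℝ (Rn n)) (J : Rn n → Rn n) : Prop :=
  (∀ X ∈ V, J X ∈ V) ∧ ∀ X ∈ V, actN (vecMat n X) φ = I • actN (vecMat n (J X)) φ

def Fop (r n : ℕ) (φ : TwSpinor r n) : TwSpinor r n :=
  ((-I) ^ (n / 2) * I ^ (r / 2)) • actN (volMat n) (actR (volMat r) φ)

def tripleFrame (m r : ℕ) (v vJ : Fin m → Rn (2*m+r)) (w : Fin r → Rn (2*m+r)) :
    Fin (2*m+r) → Rn (2*m+r) :=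
  fun i => if h : (i : ℕ) < 2*m then
      (if (i : ℕ) % 2 = 0 then v ⟨(i:ℕ)/2, by omega⟩ else vJ ⟨(i:ℕ)/2, by omega⟩)
    else w ⟨(i:ℕ) - 2*m, by have := i.isLt; omega⟩

def frameDet (n : ℕ) (u : Fin n → Rn n) : ℝ := (Matrix.of fun i j => u i j).det

def TripleSign (m r : ℕ) (φ : TwSpinor r (2*m+r)) (V : Submodule ℝ (Rn (2*m+r)))
    (J : Rn (2*m+r) → Rn (2*m+r)) (c : ℝ) : Prop :=
  ∃ (v : Fin m → Rn (2*m+r)) (w : Fin r → Rn (2*m+r)),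
    (∀ j, v j ∈ V) ∧ IsEtaFrame r (2*m+r) φ V w ∧
    Orthonormal ℝ (tripleFrame m r v (fun j => J (v j)) w) ∧
    frameDet (2*m+r) (tripleFrame m r v (fun j => J (v j)) w) = c

def IsCompatTriple (m r : ℕ) (V : Submodule ℝ (Rn (2*m+r)))
    (J : Rn (2*m+r) → Rn (2*m+r)) (w : Fin r → Rn (2*m+r)) : Prop :=
  Module.finrank ℝ V = 2*m ∧ (∀ x ∈ V, J x ∈ V) ∧ (∀ x ∈ V, J (J x) = -x) ∧
  (∀ x ∈ V, ∀ y ∈ V, (inner ℝ (J x) (J y) : ℝ) = (inner ℝ x y : ℝ)) ∧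
  Orthonormal ℝ w ∧ (∀ k, w k ∈ Vᗮ)

def IsPosTriple (m r : ℕ) (V : Submodule ℝ (Rn (2*m+r)))
    (J : Rn (2*m+r) → Rn (2*m+r)) (w : Fin r → Rn (2*m+r)) : Prop :=
  IsCompatTriple m r V J w ∧ ∃ v : Fin m → Rn (2*m+r), (∀ j, v j ∈ V) ∧
    Orthonormal ℝ (tripleFrame m r v (fun j => J (v j)) w) ∧
    frameDet (2*m+r) (tripleFrame m r v (fun j => J (v j)) w) = 1

def SpinMat (n : ℕ) : Set (Matrix (SpIdx n) (SpIdx n) ℂ) :=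
  {M | ∃ L : List (Rn n), L.length % 2 = 0 ∧ (∀ x ∈ L, ‖x‖ = 1) ∧
        M = (L.map (vecMat n)).prod}

def kronOp {r n : ℕ} (h : Matrix (SpIdx r) (SpIdx r) ℂ) (g : Matrix (SpIdx n) (SpIdx n) ℂ) :
    Matrix (SpIdx r × SpIdx n) (SpIdx r × SpIdx n) ℂ :=
  Matrix.of fun p q => h p.1 q.1 * g p.2 q.2

def SpinCR (r n : ℕ) : Set (Matrix (SpIdx r × SpIdx n) (SpIdx r × SpIdx n) ℂ) :=
  {U | ∃ g ∈ SpinMat n, ∃ h ∈ SpinMat r, ∃ z : ℂ, ‖z‖ = 1 ∧ U = z • kronOp h g}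

def SpinCsub (r n : ℕ) : Set (Matrix (SpIdx r × SpIdx n) (SpIdx r × SpIdx n) ℂ) :=
  {U | ∃ h ∈ SpinMat r, ∃ z : ℂ, ‖z‖ = 1 ∧ U = z • kronOp h 1}

def twAct {r n : ℕ} (U : Matrix (SpIdx r × SpIdx n) (SpIdx r × SpIdx n) ℂ)
    (φ : TwSpinor r n) : TwSpinor r n :=
  WithLp.toLp 2 (fun p => ∑ q, U p q * φ q)

def SOset (r : ℕ) : Set (Matrix (Fin r) (Fin r) ℝ) := {B | B * Bᵀ = 1 ∧ B.det = 1}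

def SOg (r : ℕ) : Subgroup (Matrix.orthogonalGroup (Fin r) ℝ) :=
  MonoidHom.ker (Matrix.detMonoidHom.comp (Matrix.orthogonalGroup (Fin r) ℝ).subtype)

def soMat {r : ℕ} (B : ↥(SOg r)) : Matrix (Fin r) (Fin r) ℝ := ((B : Matrix.orthogonalGroup (Fin r) ℝ) : Matrix (Fin r) (Fin r) ℝ)

def toCvec (m r : ℕ) (x : Rn (2*m+r)) : Fin m → ℂ :=
  fun j => (x ⟨2*(j:ℕ), by have := j.isLt; omega⟩ : ℝ) + (x ⟨2*(j:ℕ)+1, by have := j.isLt; omega⟩ : ℝ) * I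

def blockMap (m r : ℕ) (A : Matrix (Fin m) (Fin m) ℂ) (B : Matrix (Fin r) (Fin r) ℝ) :
    Rn (2*m+r) → Rn (2*m+r) :=
  fun x => WithLp.toLp 2 (fun i =>
    if h : (i : ℕ) < 2*m then
      (if (i : ℕ) % 2 = 0 then (A.mulVec (toCvec m r x) ⟨(i:ℕ)/2, by omega⟩).re
       else (A.mulVec (toCvec m r x) ⟨(i:ℕ)/2, by omega⟩).im)
    else ∑ k : Fin r, B ⟨(i:ℕ) - 2*m, by have := i.isLt; omega⟩ k
            * x ⟨2*m + (k:ℕ), by have := k.isLt; omega⟩)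


namespace Stmt9Helper

section Aux2x2
lemma g1_mul_g2 : g1M * g2M = -(g2M * g1M) := by
  ext i j; fin_cases i <;> fin_cases j <;>
    simp [g1M, g2M, TM, Matrix.mul_apply, Fin.sum_univ_two]
lemma g1_mul_TM : g1M * TM = -(TM * g1M) := by
  ext i j; fin_cases i <;> fin_cases j <;>
    simp [g1M, g2M, TM, Matrix.mul_apply, Fin.sum_univ_two]
lemma g2_mul_TM : g2M * TM = -(TM * g2M) := by
  ext i j; fin_cases i <;> fin_cases j <;>
    simp [g1M, g2M, TM, Matrix.mul_apply, Fin.sum_univ_two]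
lemma g1_sq : g1M * g1M = -1 := by
  ext i j; fin_cases i <;> fin_cases j <;>
    simp [g1M, Matrix.mul_apply, Fin.sum_univ_two, Complex.ext_iff]
lemma g2_sq : g2M * g2M = -1 := by
  ext i j; fin_cases i <;> fin_cases j <;>
    simp [g2M, Matrix.mul_apply, Fin.sum_univ_two, Complex.ext_iff]
lemma TM_sq : TM * TM = 1 := by
  ext i j; fin_cases i <;> fin_cases j <;>
    simp [TM, Matrix.mul_apply, Fin.sum_univ_two, Complex.ext_iff]
lemma g1_conjT : g1Mᴴ = -g1M := by
  ext i j; fin_cases i <;> fin_cases j <;> simp [g1M]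
lemma g2_conjT : g2Mᴴ = -g2M := by
  ext i j; fin_cases i <;> fin_cases j <;> simp [g2M]
lemma TM_conjT : TMᴴ = TM := by
  ext i j; fin_cases i <;> fin_cases j <;> simp [TM]
end Aux2x2

lemma tensorOp_mul' {k : ℕ} (M N : Fin k → Matrix (Fin 2) (Fin 2) ℂ) :
    tensorOp M * tensorOp N = tensorOp fun t => M t * N t := by
  ext x y
  simp only [tensorOp, Matrix.mul_apply, Matrix.of_apply]
  rw [Finset.prod_univ_sum]
  rw [← Fintype.piFinset_univ]
  exact Finset.sum_congr rfl fun z _ => (Finset.prod_mul_distrib).symm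

lemma tensorOp_one {k : ℕ} : tensorOp (fun _ : Fin k => (1 : Matrix (Fin 2) (Fin 2) ℂ)) = 1 := by
  ext x y
  simp only [tensorOp, Matrix.of_apply, Matrix.one_apply]
  by_cases h : x = y
  · subst h; simp
  · rw [if_neg h]
    obtain ⟨t, ht⟩ : ∃ t, x t ≠ y t := by
      by_contra hc; push_neg at hc; exact h (funext hc)
    exact Finset.prod_eq_zero (Finset.mem_univ t) (by simp [Matrix.one_apply, ht])

lemma tensorOp_conjT {k : ℕ} (M : Fin k → Matrix (Fin 2) (Fin 2) ℂ) :
    (tensorOp M)ᴴ = tensorOp fun t => (M t)ᴴ := by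
  ext x y
  simp [tensorOp, Matrix.conjTranspose_apply, map_prod]

lemma tensorOp_neg_slot {k : ℕ} (M N : Fin k → Matrix (Fin 2) (Fin 2) ℂ) (s : Fin k)
    (hs : N s = -(M s)) (ho : ∀ t, t ≠ s → N t = M t) :
    tensorOp N = -(tensorOp M) := by
  ext x y
  simp only [tensorOp, Matrix.of_apply, Matrix.neg_apply]
  calc ∏ t, N t (x t) (y t)
      = ∏ t, (if t = s then (-1:ℂ) else 1) * M t (x t) (y t) := by
        refine Finset.prod_congr rfl fun t _ => ?_
        by_cases h : t = s
        · subst h; simp [hs]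
        · simp [h, ho t h]
    _ = -∏ t, M t (x t) (y t) := by
        rw [Finset.prod_mul_distrib, Finset.prod_ite_eq' Finset.univ s fun _ => (-1:ℂ)]
        simp

lemma tensorOp_anticomm {k : ℕ} (M N : Fin k → Matrix (Fin 2) (Fin 2) ℂ) (s : Fin k)
    (hs : M s * N s = -(N s * M s)) (ho : ∀ t, t ≠ s → M t * N t = N t * M t) :
    tensorOp M * tensorOp N = -(tensorOp N * tensorOp M) := by
  rw [tensorOp_mul', tensorOp_mul']
  exact tensorOp_neg_slot (fun t => N t * M t) (fun t => M t * N t) s hs ho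

lemma tensorOp_sq_neg_one {k : ℕ} (M : Fin k → Matrix (Fin 2) (Fin 2) ℂ) (s : Fin k)
    (hs : M s * M s = -1) (ho : ∀ t, t ≠ s → M t * M t = 1) :
    tensorOp M * tensorOp M = -1 := by
  rw [tensorOp_mul']
  rw [tensorOp_neg_slot (fun _ => (1 : Matrix (Fin 2) (Fin 2) ℂ)) (fun t => M t * M t) s
    (by simpa using hs) (by simpa using ho), tensorOp_one]

def gP (i : ℕ) : Matrix (Fin 2) (Fin 2) ℂ := if i % 2 = 0 then g1M else g2M

lemma gP_sq (i : ℕ) : gP i * gP i = -1 := by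
  unfold gP; split <;> [exact g1_sq; exact g2_sq]

lemma gP_conjT (i : ℕ) : (gP i)ᴴ = -(gP i) := by
  unfold gP; split <;> [exact g1_conjT; exact g2_conjT]

lemma gP_mul_TM (i : ℕ) : gP i * TM = -(TM * gP i) := by
  unfold gP; split <;> [exact g1_mul_TM; exact g2_mul_TM]

lemma gP_mul_gP (i j : ℕ) (h : i % 2 ≠ j % 2) : gP i * gP j = -(gP j * gP i) := by
  have h4 : (i%2=0 ∧ j%2=1) ∨ (i%2=1 ∧ j%2=0) := by omega
  rcases h4 with ⟨hi,hj⟩|⟨hi,hj⟩ <;> simp only [gP, hi, hj] <;> norm_num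
  · exact g1_mul_g2
  · simp [g1_mul_g2]

def fac (n i : ℕ) : Fin (n/2) → Matrix (Fin 2) (Fin 2) ℂ := fun t =>
  if (t : ℕ) < n / 2 - 1 - i / 2 then 1
  else if (t : ℕ) = n / 2 - 1 - i / 2 then gP i
  else TM

lemma genMat_eq (n i : ℕ) (h : i < 2 * (n / 2)) : genMat n i = tensorOp (fac n i) := by
  rw [genMat, if_pos h]; rfl

lemma genMat_eq_top (n i : ℕ) (h : ¬ i < 2 * (n / 2)) :
    genMat n i = I • tensorOp (fun _ => TM) := by
  rw [genMat, if_neg h]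

lemma fac_slot (n i : ℕ) (hi : i < 2 * (n/2)) :
    fac n i ⟨n/2 - 1 - i/2, by omega⟩ = gP i := by
  simp [fac]

lemma fac_lt (n i : ℕ) (t : Fin (n/2)) (h : (t:ℕ) < n/2 - 1 - i/2) : fac n i t = 1 := by
  simp [fac, h]

lemma fac_gt (n i : ℕ) (t : Fin (n/2)) (h : n/2 - 1 - i/2 < (t:ℕ)) : fac n i t = TM := by
  rw [fac]; rw [if_neg (by omega), if_neg (by omega)]

lemma genMat_anticomm_aux {n i j : ℕ} (hij : i < j) (hj : j < n) :
    genMat n i * genMat n j = -(genMat n j * genMat n i) := by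
  have hs2 : i / 2 ≤ j / 2 := Nat.div_le_div_right hij.le
  by_cases hj2 : j < 2 * (n / 2)
  · have hi2 : i < 2 * (n / 2) := lt_trans hij hj2
    rw [genMat_eq n i hi2, genMat_eq n j hj2]
    refine tensorOp_anticomm _ _ ⟨n/2 - 1 - i/2, by omega⟩ ?_ ?_
    · rw [fac_slot n i hi2]
      by_cases hp : i / 2 = j / 2
      · have : fac n j ⟨n/2 - 1 - i/2, by omega⟩ = gP j := by
          have hfin : (⟨n/2 - 1 - i/2, by omega⟩ : Fin (n/2)) = ⟨n/2 - 1 - j/2, by omega⟩ :=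
            Fin.ext (by simp; omega)
          rw [hfin]; exact fac_slot n j hj2
        rw [this]
        exact gP_mul_gP i j (by omega)
      · have hlt : i / 2 < j / 2 := lt_of_le_of_ne hs2 hp
        have : fac n j ⟨n/2 - 1 - i/2, by omega⟩ = TM := by
          apply fac_gt; simp; omega
        rw [this]
        exact gP_mul_TM i
    · intro t ht
      have htv : (t : ℕ) ≠ n/2 - 1 - i/2 := by
        intro hc; exact ht (by apply Fin.ext; simpa using hc)
      rcases lt_or_gt_of_ne htv with hlt | hgt
      · rw [fac_lt n i t hlt, one_mul, mul_one]
      · rw [fac_gt n i t hgt, fac_gt n j t (by omega)]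
  · have hi2 : i < 2 * (n / 2) := by omega
    rw [genMat_eq n i hi2, genMat_eq_top n j hj2]
    rw [mul_smul_comm, smul_mul_assoc, ← smul_neg]
    congr 1
    refine tensorOp_anticomm _ _ ⟨n/2 - 1 - i/2, by omega⟩ ?_ ?_
    · rw [fac_slot n i hi2]; exact gP_mul_TM i
    · intro t ht
      have htv : (t : ℕ) ≠ n/2 - 1 - i/2 := by
        intro hc; exact ht (by apply Fin.ext; simpa using hc)
      rcases lt_or_gt_of_ne htv with hlt | hgt
      · rw [fac_lt n i t hlt, one_mul, mul_one]
      · rw [fac_gt n i t hgt]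

lemma genMat_anticomm {n i j : ℕ} (hi : i < n) (hj : j < n) (hij : i ≠ j) :
    genMat n i * genMat n j = -(genMat n j * genMat n i) := by
  rcases lt_or_gt_of_ne hij with h | h
  · exact genMat_anticomm_aux h hj
  · rw [genMat_anticomm_aux h hi, neg_neg]

lemma genMat_sq {n i : ℕ} (hi : i < n) : genMat n i * genMat n i = -1 := by
  by_cases h : i < 2 * (n / 2)
  · rw [genMat_eq n i h]
    refine tensorOp_sq_neg_one _ ⟨n/2 - 1 - i/2, by omega⟩ ?_ ?_
    · rw [fac_slot n i h]; exact gP_sq i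
    · intro t ht
      have htv : (t : ℕ) ≠ n/2 - 1 - i/2 := by
        intro hc; exact ht (by apply Fin.ext; simpa using hc)
      rcases lt_or_gt_of_ne htv with hlt | hgt
      · rw [fac_lt n i t hlt, one_mul]
      · rw [fac_gt n i t hgt]; exact TM_sq
  · rw [genMat_eq_top n i h, smul_mul_assoc, mul_smul_comm, smul_smul, I_mul_I]
    rw [tensorOp_mul']
    have : (fun t : Fin (n/2) => TM * TM) = fun _ => (1 : Matrix (Fin 2) (Fin 2) ℂ) :=
      funext fun _ => TM_sq
    rw [this, tensorOp_one, neg_smul, one_smul]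

lemma genMat_conjT {n i : ℕ} (hi : i < n) : (genMat n i)ᴴ = -(genMat n i) := by
  by_cases h : i < 2 * (n / 2)
  · rw [genMat_eq n i h, tensorOp_conjT]
    refine tensorOp_neg_slot (fac n i) _ ⟨n/2 - 1 - i/2, by omega⟩ ?_ ?_
    · simp only [fac_slot n i h]; exact gP_conjT i
    · intro t ht
      have htv : (t : ℕ) ≠ n/2 - 1 - i/2 := by
        intro hc; exact ht (by apply Fin.ext; simpa using hc)
      rcases lt_or_gt_of_ne htv with hlt | hgt
      · rw [fac_lt n i t hlt]; simp
      · simp only [fac_gt n i t hgt]; exact TM_conjT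
  · rw [genMat_eq_top n i h, Matrix.conjTranspose_smul, tensorOp_conjT]
    have : (fun t : Fin (n/2) => TMᴴ) = fun _ => TM := funext fun _ => TM_conjT
    rw [this]
    simp [Complex.conj_I, neg_smul]

section KronLemmas
variable {r n : ℕ}

lemma kron_mul (h h' : Matrix (SpIdx r) (SpIdx r) ℂ) (g g' : Matrix (SpIdx n) (SpIdx n) ℂ) :
    kronOp h g * kronOp h' g' = kronOp (h * h') (g * g') := by
  ext p q
  simp only [kronOp, Matrix.mul_apply, Matrix.of_apply, Fintype.sum_prod_type]
  rw [Finset.sum_mul_sum]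
  exact Finset.sum_congr rfl fun a _ => Finset.sum_congr rfl fun b _ => by ring

lemma kron_conjT (h : Matrix (SpIdx r) (SpIdx r) ℂ) (g : Matrix (SpIdx n) (SpIdx n) ℂ) :
    (kronOp h g)ᴴ = kronOp hᴴ gᴴ := by
  ext p q
  simp [kronOp, Matrix.conjTranspose_apply, mul_comm]

lemma kron_add_right (h : Matrix (SpIdx r) (SpIdx r) ℂ) (g g' : Matrix (SpIdx n) (SpIdx n) ℂ) :
    kronOp h (g + g') = kronOp h g + kronOp h g' := by
  ext p q; simp [kronOp, mul_add]

lemma kron_sub_right (h : Matrix (SpIdx r) (SpIdx r) ℂ) (g g' : Matrix (SpIdx n) (SpIdx n) ℂ) :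
    kronOp h (g - g') = kronOp h g - kronOp h g' := by
  ext p q; simp [kronOp, mul_sub]

lemma kron_smul_right (h : Matrix (SpIdx r) (SpIdx r) ℂ) (c : ℂ) (g : Matrix (SpIdx n) (SpIdx n) ℂ) :
    kronOp h (c • g) = c • kronOp h g := by
  ext p q; simp [kronOp]; ring

lemma kron_neg_right (h : Matrix (SpIdx r) (SpIdx r) ℂ) (g : Matrix (SpIdx n) (SpIdx n) ℂ) :
    kronOp h (-g) = -(kronOp h g) := by
  ext p q; simp [kronOp]

lemma kron_neg_left (h : Matrix (SpIdx r) (SpIdx r) ℂ) (g : Matrix (SpIdx n) (SpIdx n) ℂ) :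
    kronOp (-h) g = -(kronOp h g) := by
  ext p q; simp [kronOp]

lemma kron_zero_right (h : Matrix (SpIdx r) (SpIdx r) ℂ) :
    kronOp h (0 : Matrix (SpIdx n) (SpIdx n) ℂ) = 0 := by
  ext p q; simp [kronOp]

lemma kron_sum_right {α : Type*} (s : Finset α) (h : Matrix (SpIdx r) (SpIdx r) ℂ)
    (g : α → Matrix (SpIdx n) (SpIdx n) ℂ) :
    kronOp h (∑ i ∈ s, g i) = ∑ i ∈ s, kronOp h (g i) := by
  ext p q; simp [kronOp, Finset.mul_sum, Matrix.sum_apply]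

lemma actN_eq (M : Matrix (SpIdx n) (SpIdx n) ℂ) (φ : TwSpinor r n) :
    actN M φ = WithLp.toLp 2 ((kronOp (1 : Matrix (SpIdx r) (SpIdx r) ℂ) M).mulVec φ) := by
  ext p
  simp only [actN, PiLp.toLp_apply, kronOp, Matrix.mulVec, dotProduct, Matrix.of_apply,
    Fintype.sum_prod_type, Matrix.one_apply]
  rw [Finset.sum_eq_single p.1]
  · simp
  · intro a _ ha; simp [Ne.symm ha]
  · simp

lemma actR_eq (M : Matrix (SpIdx r) (SpIdx r) ℂ) (φ : TwSpinor r n) :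
    actR M φ = WithLp.toLp 2 ((kronOp M (1 : Matrix (SpIdx n) (SpIdx n) ℂ)).mulVec φ) := by
  ext p
  simp only [actR, PiLp.toLp_apply, kronOp, Matrix.mulVec, dotProduct, Matrix.of_apply,
    Fintype.sum_prod_type, Matrix.one_apply]
  refine Finset.sum_congr rfl fun a _ => ?_
  rw [Finset.sum_eq_single p.2]
  · simp
  · intro b _ hb; simp [Ne.symm hb]
  · simp

lemma inner_mulVec_adj (U : Matrix (SpIdx r × SpIdx n) (SpIdx r × SpIdx n) ℂ)
    (x y : TwSpinor r n) :
    (@inner ℂ (TwSpinor r n) _ (WithLp.toLp 2 (U.mulVec x)) y) = @inner ℂ (TwSpinor r n) _ x (WithLp.toLp 2 (Uᴴ.mulVec y)) := by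
  simp only [PiLp.inner_apply, PiLp.toLp_apply, RCLike.inner_apply, Matrix.mulVec, dotProduct,
    Matrix.conjTranspose_apply, map_sum, _root_.map_mul, Finset.mul_sum, Finset.sum_mul]
  rw [Finset.sum_comm]
  refine Finset.sum_congr rfl fun p _ => Finset.sum_congr rfl fun q _ => ?_
  simp only [starRingEnd_apply]
  ring
end KronLemmas

section QFdef
variable {r n : ℕ}

def QF (φ : TwSpinor r n) (U : Matrix (SpIdx r × SpIdx n) (SpIdx r × SpIdx n) ℂ) : ℝ :=
  (@inner ℂ (TwSpinor r n) _ (WithLp.toLp 2 (U.mulVec φ)) φ).re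

variable (φ : TwSpinor r n)

lemma QF_eq (U : Matrix (SpIdx r × SpIdx n) (SpIdx r × SpIdx n) ℂ) :
    QF φ U = (∑ p, (starRingEnd ℂ) (U.mulVec φ p) * φ p).re := by
  rw [QF]; congr 1
  rw [PiLp.inner_apply]; exact Finset.sum_congr rfl fun p _ => RCLike.inner_apply' _ _

lemma QF_zero : QF φ 0 = 0 := by
  simp [QF_eq, Matrix.zero_mulVec]

lemma QF_add (U V : Matrix (SpIdx r × SpIdx n) (SpIdx r × SpIdx n) ℂ) :
    QF φ (U + V) = QF φ U + QF φ V := by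
  simp [QF_eq, Matrix.add_mulVec, add_mul, Finset.sum_add_distrib]

lemma QF_neg (U : Matrix (SpIdx r × SpIdx n) (SpIdx r × SpIdx n) ℂ) :
    QF φ (-U) = -QF φ U := by
  simp [QF_eq, Matrix.neg_mulVec, Finset.sum_neg_distrib]

lemma QF_sub (U V : Matrix (SpIdx r × SpIdx n) (SpIdx r × SpIdx n) ℂ) :
    QF φ (U - V) = QF φ U - QF φ V := by
  rw [sub_eq_add_neg, QF_add, QF_neg, sub_eq_add_neg]

lemma QF_smul (c : ℝ) (U : Matrix (SpIdx r × SpIdx n) (SpIdx r × SpIdx n) ℂ) :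
    QF φ ((c : ℂ) • U) = c * QF φ U := by
  rw [QF_eq, QF_eq]
  have : ∀ p, (starRingEnd ℂ) (((c:ℂ) • U).mulVec φ p) * φ p
      = (c:ℂ) * ((starRingEnd ℂ) (U.mulVec φ p) * φ p) := by
    intro p
    rw [Matrix.smul_mulVec]
    simp [Complex.conj_ofReal]
    ring
  rw [Finset.sum_congr rfl fun p _ => this p, ← Finset.mul_sum, Complex.re_ofReal_mul]

lemma QF_sum {α : Type*} (s : Finset α)
    (U : α → Matrix (SpIdx r × SpIdx n) (SpIdx r × SpIdx n) ℂ) :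
    QF φ (∑ i ∈ s, U i) = ∑ i ∈ s, QF φ (U i) := by
  induction s using Finset.cons_induction with
  | empty => simp [QF_zero]
  | cons a s ha ih => rw [Finset.sum_cons, Finset.sum_cons, QF_add, ih]

lemma QF_mul_right (U V V' : Matrix (SpIdx r × SpIdx n) (SpIdx r × SpIdx n) ℂ)
    (h : V.mulVec φ = V'.mulVec φ) : QF φ (U * V) = QF φ (U * V') := by
  rw [QF, QF, ← Matrix.mulVec_mulVec, ← Matrix.mulVec_mulVec, h]

lemma QF_move (M W U : Matrix (SpIdx r × SpIdx n) (SpIdx r × SpIdx n) ℂ)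
    (hM : Mᴴ.mulVec φ = W.mulVec φ) : QF φ (M * U) = QF φ (Wᴴ * U) := by
  rw [QF, QF, ← Matrix.mulVec_mulVec, ← Matrix.mulVec_mulVec]
  congr 1
  rw [inner_mulVec_adj, hM, ← Matrix.conjTranspose_conjTranspose W, ← inner_mulVec_adj,
    Matrix.conjTranspose_conjTranspose]

end QFdef

section Main
variable {r n : ℕ} (φ : TwSpinor r n)

def WBm (n : ℕ) (a b : Fin n) : Matrix (SpIdx n) (SpIdx n) ℂ :=
  genMat n (a:ℕ) * genMat n (b:ℕ) + (if a = b then (1:ℂ) else 0) • 1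

lemma vecMat_basis (a : Fin n) : vecMat n (stdBasis n a) = genMat n (a : ℕ) := by
  rw [vecMat]
  have : ∀ i : Fin n, ((stdBasis n a i : ℝ) : ℂ) • genMat n (i:ℕ)
      = if i = a then genMat n (i:ℕ) else 0 := by
    intro i
    by_cases h : i = a
    · subst h; simp [_root_.stdBasis, EuclideanSpace.single_apply]
    · simp [_root_.stdBasis, EuclideanSpace.single_apply, h]
  rw [Finset.sum_congr rfl fun i _ => this i, Finset.sum_ite_eq' Finset.univ a]
  simp

lemma inner_std (a b : Fin n) : (inner ℝ (stdBasis n a) (stdBasis n b) : ℝ) = if a = b then 1 else 0 := by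
  simp [_root_.stdBasis, PiLp.inner_apply, EuclideanSpace.single_apply, RCLike.inner_apply]

lemma wedge_basis (a b : Fin n) : wedgeMat n (stdBasis n a) (stdBasis n b) = WBm n a b := by
  rw [wedgeMat, vecMat_basis, vecMat_basis, WBm, inner_std]
  congr 1
  by_cases h : a = b <;> simp [h]

lemma eta_basis (k l : ℕ) (a b : Fin n) :
    eta r n φ k l (stdBasis n a) (stdBasis n b)
      = QF φ (kronOp (genMat r k * genMat r l) (WBm n a b)) := by
  rw [_root_.eta, etaM, wedge_basis, actR_eq, actN_eq, Matrix.mulVec_mulVec, kron_mul, one_mul, mul_one, QF]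

lemma WBm_skew (a b : Fin n) : WBm n a b = -(WBm n b a) := by
  by_cases h : a = b
  · subst h
    rw [WBm, genMat_sq (a.isLt)]
    simp
  · have hab : (a:ℕ) ≠ (b:ℕ) := fun hc => h (Fin.ext hc)
    rw [WBm, WBm, genMat_anticomm a.isLt b.isLt hab]
    simp [h, Ne.symm h]

lemma eta_skew (k l : ℕ) (a b : Fin n) :
    eta r n φ k l (stdBasis n a) (stdBasis n b) = -(eta r n φ k l (stdBasis n b) (stdBasis n a)) := by
  rw [eta_basis, eta_basis, WBm_skew a b, kron_neg_right, QF_neg]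

lemma eta_diag (k l : ℕ) (a : Fin n) : eta r n φ k l (stdBasis n a) (stdBasis n a) = 0 := by
  have := eta_skew φ k l a a
  linarith

lemma eta_flip (k l : Fin r) (h : k ≠ l) (a b : Fin n) :
    eta r n φ (l:ℕ) (k:ℕ) (stdBasis n a) (stdBasis n b)
      = -(eta r n φ (k:ℕ) (l:ℕ) (stdBasis n a) (stdBasis n b)) := by
  have hkl : (k:ℕ) ≠ (l:ℕ) := fun hc => h (Fin.ext hc)
  rw [eta_basis, eta_basis, genMat_anticomm l.isLt k.isLt (Ne.symm hkl), kron_neg_left, QF_neg]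

lemma Fpair_conjT (k l : Fin r) (h : k ≠ l) :
    (genMat r (k:ℕ) * genMat r (l:ℕ))ᴴ = -(genMat r (k:ℕ) * genMat r (l:ℕ)) := by
  have hkl : (k:ℕ) ≠ (l:ℕ) := fun hc => h (Fin.ext hc)
  rw [Matrix.conjTranspose_mul, genMat_conjT k.isLt, genMat_conjT l.isLt, neg_mul, mul_neg,
    neg_neg, genMat_anticomm l.isLt k.isLt (Ne.symm hkl)]

end Main

section Main2
variable {r n : ℕ} (φ : TwSpinor r n)

lemma sum_mulVec' {ι : Type*} [Fintype ι] [DecidableEq ι] {α : Type*} (s : Finset α)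
    (M : α → Matrix ι ι ℂ) (v : ι → ℂ) :
    (∑ i ∈ s, M i).mulVec v = ∑ i ∈ s, (M i).mulVec v := by
  induction s using Finset.cons_induction with
  | empty => simp [Matrix.zero_mulVec]
  | cons a s ha ih => rw [Finset.sum_cons, Finset.sum_cons, Matrix.add_mulVec, ih]

def OmegaN (φ : TwSpinor r n) (k l : ℕ) : Matrix (SpIdx n) (SpIdx n) ℂ :=
  ∑ a : Fin n, ∑ b : Fin n, if a < b then
    ((_root_.eta r n φ k l (_root_.stdBasis n a) (_root_.stdBasis n b) : ℝ) : ℂ)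
      • (genMat n (a:ℕ) * genMat n (b:ℕ)) else 0

lemma constraint_sorted (k l : ℕ)
    (hplus : etaActionM r n (genMat r k * genMat r l) φ + actR (genMat r k * genMat r l) φ = 0) :
    (kronOp (1 : Matrix (SpIdx r) (SpIdx r) ℂ) (OmegaN φ k l)).mulVec φ
      = -((kronOp (genMat r k * genMat r l) (1 : Matrix (SpIdx n) (SpIdx n) ℂ)).mulVec φ) := by
  have h1 : (kronOp (1 : Matrix (SpIdx r) (SpIdx r) ℂ) (OmegaN φ k l)).mulVec φ
      = etaActionM r n (genMat r k * genMat r l) φ := by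
    rw [OmegaN, kron_sum_right, sum_mulVec', etaActionM, WithLp.ofLp_sum]
    refine Finset.sum_congr rfl fun a _ => ?_
    rw [kron_sum_right, sum_mulVec', WithLp.ofLp_sum]
    refine Finset.sum_congr rfl fun b _ => ?_
    by_cases hab : a < b
    · rw [if_pos hab, if_pos hab, kron_smul_right, Matrix.smul_mulVec, WithLp.ofLp_smul, actN_eq]
      rfl
    · rw [if_neg hab, if_neg hab, kron_zero_right, Matrix.zero_mulVec, WithLp.ofLp_zero]
  rw [h1, eq_neg_of_add_eq_zero_left hplus, actR_eq]
  rfl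

lemma OmegaN_flip (k l : Fin r) (h : k ≠ l) :
    OmegaN φ (k:ℕ) (l:ℕ) = -(OmegaN φ (l:ℕ) (k:ℕ)) := by
  rw [OmegaN, OmegaN, ← Finset.sum_neg_distrib]
  refine Finset.sum_congr rfl fun a _ => ?_
  rw [← Finset.sum_neg_distrib]
  refine Finset.sum_congr rfl fun b _ => ?_
  by_cases hab : a < b
  · rw [if_pos hab, if_pos hab, eta_flip φ l k (Ne.symm h) a b]
    push_cast
    rw [neg_smul]
  · simp [hab]

lemma OmegaN_conjT (k l : ℕ) : (OmegaN φ k l)ᴴ = -(OmegaN φ k l) := by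
  rw [OmegaN, Matrix.conjTranspose_sum, ← Finset.sum_neg_distrib]
  refine Finset.sum_congr rfl fun a _ => ?_
  rw [Matrix.conjTranspose_sum, ← Finset.sum_neg_distrib]
  refine Finset.sum_congr rfl fun b _ => ?_
  by_cases hab : a < b
  · have hne : (a:ℕ) ≠ (b:ℕ) := Nat.ne_of_lt hab
    rw [if_pos hab, Matrix.conjTranspose_smul, Matrix.conjTranspose_mul,
      genMat_conjT a.isLt, genMat_conjT b.isLt, Complex.star_def, Complex.conj_ofReal,
      neg_mul_neg, genMat_anticomm b.isLt a.isLt (Ne.symm hne), smul_neg]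
  · simp [hab]

lemma constraint (k l : Fin r) (hkl : k ≠ l)
    (hplus : ∀ k' l' : Fin r, k' < l' →
      etaActionM r n (genMat r (k':ℕ) * genMat r (l':ℕ)) φ
        + actR (genMat r (k':ℕ) * genMat r (l':ℕ)) φ = 0) :
    (kronOp (1 : Matrix (SpIdx r) (SpIdx r) ℂ) (OmegaN φ (k:ℕ) (l:ℕ))).mulVec φ
      = -((kronOp (genMat r (k:ℕ) * genMat r (l:ℕ)) (1 : Matrix (SpIdx n) (SpIdx n) ℂ)).mulVec φ) := by
  have hne : (k:ℕ) ≠ (l:ℕ) := fun hc => hkl (Fin.ext hc)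
  rcases hkl.lt_or_gt with h | h
  · exact constraint_sorted φ (k:ℕ) (l:ℕ) (hplus k l h)
  · have base := constraint_sorted φ (l:ℕ) (k:ℕ) (hplus l k h)
    rw [OmegaN_flip φ k l hkl, kron_neg_right, Matrix.neg_mulVec, base,
      genMat_anticomm k.isLt l.isLt hne, kron_neg_left, Matrix.neg_mulVec]

end Main2

section Main3
variable {r n : ℕ} (φ : TwSpinor r n)

lemma key_comm (a b m : Fin n) (hab : a < b) :
    (genMat n (a:ℕ) * genMat n (b:ℕ)) * genMat n (m:ℕ)
      - genMat n (m:ℕ) * (genMat n (a:ℕ) * genMat n (b:ℕ))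
    = if a = m then (2:ℂ) • genMat n (b:ℕ)
      else if b = m then -((2:ℂ) • genMat n (a:ℕ)) else 0 := by
  have hne : (a:ℕ) ≠ (b:ℕ) := Nat.ne_of_lt hab
  by_cases ham : a = m
  · subst ham
    rw [if_pos rfl]
    have h1 : genMat n (a:ℕ) * genMat n (b:ℕ) * genMat n (a:ℕ) = genMat n (b:ℕ) := by
      rw [genMat_anticomm a.isLt b.isLt hne, neg_mul, mul_assoc, genMat_sq a.isLt]
      simp
    have h2 : genMat n (a:ℕ) * (genMat n (a:ℕ) * genMat n (b:ℕ)) = -genMat n (b:ℕ) := by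
      rw [← mul_assoc, genMat_sq a.isLt]; simp
    rw [h1, h2, sub_neg_eq_add, two_smul]
  · by_cases hbm : b = m
    · subst hbm
      rw [if_neg ham, if_pos rfl]
      have h1 : genMat n (a:ℕ) * genMat n (b:ℕ) * genMat n (b:ℕ) = -genMat n (a:ℕ) := by
        rw [mul_assoc, genMat_sq b.isLt]; simp
      have h2 : genMat n (b:ℕ) * (genMat n (a:ℕ) * genMat n (b:ℕ)) = genMat n (a:ℕ) := by
        rw [← mul_assoc, genMat_anticomm b.isLt a.isLt (Ne.symm hne), neg_mul, mul_assoc,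
          genMat_sq b.isLt]
        simp
      rw [h1, h2, two_smul]
      abel
    · rw [if_neg ham, if_neg hbm]
      have hbm' : (b:ℕ) ≠ (m:ℕ) := fun hc => hbm (Fin.ext hc)
      have ham' : (a:ℕ) ≠ (m:ℕ) := fun hc => ham (Fin.ext hc)
      have : genMat n (a:ℕ) * genMat n (b:ℕ) * genMat n (m:ℕ)
          = genMat n (m:ℕ) * (genMat n (a:ℕ) * genMat n (b:ℕ)) := by
        rw [mul_assoc, genMat_anticomm b.isLt m.isLt hbm', mul_neg, ← mul_assoc,
          genMat_anticomm a.isLt m.isLt ham', neg_mul, neg_neg, mul_assoc]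
      rw [this, sub_self]

lemma Omega_comm_abstract (c : Fin n → Fin n → ℝ)
    (hskew : ∀ a b, c a b = -(c b a)) (m : Fin n) :
    (∑ a : Fin n, ∑ b : Fin n, if a < b then ((c a b : ℝ) : ℂ) • (genMat n (a:ℕ) * genMat n (b:ℕ)) else 0)
        * genMat n (m:ℕ)
      - genMat n (m:ℕ)
        * (∑ a : Fin n, ∑ b : Fin n, if a < b then ((c a b : ℝ) : ℂ) • (genMat n (a:ℕ) * genMat n (b:ℕ)) else 0)
    = (2:ℂ) • ∑ x : Fin n, ((c m x : ℝ) : ℂ) • genMat n (x:ℕ) := by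
  have hdiag : ∀ a, c a a = 0 := fun a => by have := hskew a a; linarith
  calc (∑ a : Fin n, ∑ b : Fin n, if a < b then ((c a b : ℝ) : ℂ) • (genMat n (a:ℕ) * genMat n (b:ℕ)) else 0)
        * genMat n (m:ℕ)
      - genMat n (m:ℕ)
        * (∑ a : Fin n, ∑ b : Fin n, if a < b then ((c a b : ℝ) : ℂ) • (genMat n (a:ℕ) * genMat n (b:ℕ)) else 0)
      = ∑ a : Fin n, ∑ b : Fin n,
          ((if a < b then ((c a b : ℝ) : ℂ) • (genMat n (a:ℕ) * genMat n (b:ℕ)) else 0) * genMat n (m:ℕ)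
            - genMat n (m:ℕ) * (if a < b then ((c a b : ℝ) : ℂ) • (genMat n (a:ℕ) * genMat n (b:ℕ)) else 0)) := by
        rw [Finset.sum_mul, Finset.mul_sum, ← Finset.sum_sub_distrib]
        refine Finset.sum_congr rfl fun a _ => ?_
        rw [Finset.sum_mul, Finset.mul_sum, ← Finset.sum_sub_distrib]
    _ = ∑ a : Fin n, ∑ b : Fin n,
          ((if a = m then (if m < b then ((2:ℂ) * ((c m b : ℝ) : ℂ)) • genMat n (b:ℕ) else 0) else 0)
           + (if b = m then (if a < m then ((2:ℂ) * ((c m a : ℝ) : ℂ)) • genMat n (a:ℕ) else 0) else 0)) := by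
        refine Finset.sum_congr rfl fun a _ => Finset.sum_congr rfl fun b _ => ?_
        by_cases hab : a < b
        · rw [if_pos hab, smul_mul_assoc, mul_smul_comm, ← smul_sub, key_comm a b m hab]
          by_cases ham : a = m
          · subst ham
            rw [if_pos rfl, if_pos rfl, if_pos hab,
              if_neg (show ¬ b = a from fun h => lt_irrefl a (h ▸ hab)), add_zero, smul_smul]
            rw [mul_comm]
          · by_cases hbm : b = m
            · subst hbm
              rw [if_neg ham, if_neg ham, if_pos rfl, if_pos hab, zero_add, smul_neg, smul_smul]
              rw [hskew b a]
              push_cast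
              rw [← neg_smul]
              ring_nf
              simp
            · rw [if_neg ham, if_neg hbm, smul_zero, if_neg ham, if_neg hbm, add_zero]
        · rw [if_neg hab, zero_mul, mul_zero, sub_zero]
          by_cases ham : a = m
          · subst ham
            rw [if_pos rfl, if_neg hab, zero_add]
            by_cases hbm : b = a
            · rw [if_pos hbm, if_neg (lt_irrefl a)]
            · rw [if_neg hbm]
          · rw [if_neg ham, zero_add]
            by_cases hbm : b = m
            · subst hbm
              rw [if_pos rfl, if_neg hab]
            · rw [if_neg hbm]
    _ = (∑ b : Fin n, if m < b then ((2:ℂ) * ((c m b : ℝ) : ℂ)) • genMat n (b:ℕ) else 0)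
        + (∑ a : Fin n, if a < m then ((2:ℂ) * ((c m a : ℝ) : ℂ)) • genMat n (a:ℕ) else 0) := by
        rw [Finset.sum_congr rfl (fun a _ => Finset.sum_add_distrib), Finset.sum_add_distrib]
        congr 1
        · have e : ∀ a : Fin n,
              (∑ b : Fin n, if a = m then (if m < b then ((2:ℂ) * ((c m b : ℝ) : ℂ)) • genMat n (b:ℕ) else 0) else 0)
              = if a = m then (∑ b : Fin n, if m < b then ((2:ℂ) * ((c m b : ℝ) : ℂ)) • genMat n (b:ℕ) else 0) else 0 := by
            intro a; split_ifs <;> simp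
          rw [Finset.sum_congr rfl fun a _ => e a, Finset.sum_ite_eq' Finset.univ m]
          simp
        · refine Finset.sum_congr rfl fun a _ => ?_
          rw [Finset.sum_ite_eq' Finset.univ m]
          simp
    _ = (2:ℂ) • ∑ x : Fin n, ((c m x : ℝ) : ℂ) • genMat n (x:ℕ) := by
        rw [← Finset.sum_add_distrib, Finset.smul_sum]
        refine Finset.sum_congr rfl fun x _ => ?_
        rcases lt_trichotomy m x with h | h | h
        · rw [if_pos h, if_neg (asymm h), add_zero, smul_smul]
        · subst h
          rw [if_neg (lt_irrefl m), add_zero, hdiag m]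
          simp
        · rw [if_neg (asymm h), if_pos h, zero_add, smul_smul]

lemma Omega_comm (k l : ℕ) (m : Fin n) :
    OmegaN φ k l * genMat n (m:ℕ) - genMat n (m:ℕ) * OmegaN φ k l
      = (2:ℂ) • ∑ x : Fin n,
          ((_root_.eta r n φ k l (_root_.stdBasis n m) (_root_.stdBasis n x) : ℝ) : ℂ) • genMat n (x:ℕ) := by
  rw [OmegaN]
  exact Omega_comm_abstract (fun a b => _root_.eta r n φ k l (_root_.stdBasis n a) (_root_.stdBasis n b))
    (fun a b => eta_skew φ k l a b) m

end Main3

section Core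
variable {r n : ℕ} (φ : TwSpinor r n)

def ce (φ : TwSpinor r n) (k l : ℕ) (a b : Fin n) : ℝ :=
  _root_.eta r n φ k l (_root_.stdBasis n a) (_root_.stdBasis n b)

def Vv (φ : TwSpinor r n) (k l : ℕ) (b : Fin n) : Matrix (SpIdx n) (SpIdx n) ℂ :=
  ∑ x : Fin n, ((ce φ k l b x : ℝ) : ℂ) • genMat n (x:ℕ)

lemma ce_basis (k l : ℕ) (a b : Fin n) :
    ce φ k l a b = QF φ (kronOp (genMat r k * genMat r l) (WBm n a b)) := eta_basis φ k l a b

lemma ce_skew (k l : ℕ) (a b : Fin n) : ce φ k l a b = -(ce φ k l b a) := eta_skew φ k l a b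

lemma etaHatMat_entry (k l : ℕ) (a b : Fin n) : etaHatMat r n φ k l a b = ce φ k l b a := rfl

lemma Omega_comm_ce (k l : ℕ) (m : Fin n) :
    OmegaN φ k l * genMat n (m:ℕ) - genMat n (m:ℕ) * OmegaN φ k l = (2:ℂ) • Vv φ k l m := by
  rw [Vv]
  exact Omega_comm φ k l m

lemma core (s t k l : Fin r) (hst : s ≠ t) (hkl : k ≠ l)
    (hplus : ∀ k' l' : Fin r, k' < l' →
      etaActionM r n (genMat r (k':ℕ) * genMat r (l':ℕ)) φ
        + actR (genMat r (k':ℕ) * genMat r (l':ℕ)) φ = 0)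
    (a b : Fin n) :
    (etaHatMat r n φ (s:ℕ) (t:ℕ) * etaHatMat r n φ (k:ℕ) (l:ℕ)
      - etaHatMat r n φ (k:ℕ) (l:ℕ) * etaHatMat r n φ (s:ℕ) (t:ℕ)) a b
    = (1/2) * (QF φ (kronOp ((genMat r (s:ℕ) * genMat r (t:ℕ)) * (genMat r (k:ℕ) * genMat r (l:ℕ)))
          (genMat n (b:ℕ) * genMat n (a:ℕ)))
        - QF φ (kronOp ((genMat r (k:ℕ) * genMat r (l:ℕ)) * (genMat r (s:ℕ) * genMat r (t:ℕ)))
          (genMat n (b:ℕ) * genMat n (a:ℕ)))) := by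
  have hentry : (etaHatMat r n φ (s:ℕ) (t:ℕ) * etaHatMat r n φ (k:ℕ) (l:ℕ)
      - etaHatMat r n φ (k:ℕ) (l:ℕ) * etaHatMat r n φ (s:ℕ) (t:ℕ)) a b
      = (∑ m : Fin n, ce φ (s:ℕ) (t:ℕ) m a * ce φ (k:ℕ) (l:ℕ) b m)
        - (∑ m : Fin n, ce φ (k:ℕ) (l:ℕ) m a * ce φ (s:ℕ) (t:ℕ) b m) := by
    simp only [Matrix.sub_apply, Matrix.mul_apply, etaHatMat_entry]
  have hQ1 : ∑ m : Fin n, ce φ (s:ℕ) (t:ℕ) m a * ce φ (k:ℕ) (l:ℕ) b m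
      = QF φ (kronOp (genMat r (s:ℕ) * genMat r (t:ℕ))
          (∑ m : Fin n, ((ce φ (k:ℕ) (l:ℕ) b m : ℝ) : ℂ) • WBm n m a)) := by
    rw [kron_sum_right, QF_sum]
    refine Finset.sum_congr rfl fun m _ => ?_
    rw [kron_smul_right, QF_smul, ce_basis φ (s:ℕ) (t:ℕ) m a]
    ring
  have hQ2 : ∑ m : Fin n, ce φ (k:ℕ) (l:ℕ) m a * ce φ (s:ℕ) (t:ℕ) b m
      = QF φ (kronOp (genMat r (s:ℕ) * genMat r (t:ℕ))
          (∑ m : Fin n, ((ce φ (k:ℕ) (l:ℕ) m a : ℝ) : ℂ) • WBm n b m)) := by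
    rw [kron_sum_right, QF_sum]
    refine Finset.sum_congr rfl fun m _ => ?_
    rw [kron_smul_right, QF_smul, ce_basis φ (s:ℕ) (t:ℕ) b m]
  have hsum1 : ∑ m : Fin n, ((ce φ (k:ℕ) (l:ℕ) b m : ℝ) : ℂ) • WBm n m a
      = Vv φ (k:ℕ) (l:ℕ) b * genMat n (a:ℕ) + ((ce φ (k:ℕ) (l:ℕ) b a : ℝ) : ℂ) • 1 := by
    have hterm : ∀ m : Fin n, ((ce φ (k:ℕ) (l:ℕ) b m : ℝ) : ℂ) • WBm n m a
        = (((ce φ (k:ℕ) (l:ℕ) b m : ℝ) : ℂ) • genMat n (m:ℕ)) * genMat n (a:ℕ)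
          + (if m = a then ((ce φ (k:ℕ) (l:ℕ) b m : ℝ) : ℂ) • (1 : Matrix (SpIdx n) (SpIdx n) ℂ) else 0) := by
      intro m
      simp only [WBm]
      by_cases hma : m = a <;> simp [hma, smul_add, smul_mul_assoc]
    rw [Finset.sum_congr rfl fun m _ => hterm m, Finset.sum_add_distrib, ← Finset.sum_mul,
      Finset.sum_ite_eq' Finset.univ a, Vv]
    simp
  have hsum2 : ∑ m : Fin n, ((ce φ (k:ℕ) (l:ℕ) m a : ℝ) : ℂ) • WBm n b m
      = -(genMat n (b:ℕ) * Vv φ (k:ℕ) (l:ℕ) a) + ((ce φ (k:ℕ) (l:ℕ) b a : ℝ) : ℂ) • 1 := by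
    have hterm : ∀ m : Fin n, ((ce φ (k:ℕ) (l:ℕ) m a : ℝ) : ℂ) • WBm n b m
        = genMat n (b:ℕ) * (((ce φ (k:ℕ) (l:ℕ) m a : ℝ) : ℂ) • genMat n (m:ℕ))
          + (if b = m then ((ce φ (k:ℕ) (l:ℕ) m a : ℝ) : ℂ) • (1 : Matrix (SpIdx n) (SpIdx n) ℂ) else 0) := by
      intro m
      simp only [WBm]
      by_cases hbm : b = m <;> simp [hbm, smul_add, mul_smul_comm]
    rw [Finset.sum_congr rfl fun m _ => hterm m, Finset.sum_add_distrib, ← Finset.mul_sum,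
      Finset.sum_ite_eq Finset.univ b]
    have hVa : ∑ m : Fin n, ((ce φ (k:ℕ) (l:ℕ) m a : ℝ) : ℂ) • genMat n (m:ℕ)
        = -(Vv φ (k:ℕ) (l:ℕ) a) := by
      rw [Vv, ← Finset.sum_neg_distrib]
      refine Finset.sum_congr rfl fun m _ => ?_
      rw [ce_skew φ (k:ℕ) (l:ℕ) m a]
      push_cast
      rw [neg_smul]
    rw [hVa, mul_neg]
    simp
  have step5 : Vv φ (k:ℕ) (l:ℕ) b * genMat n (a:ℕ) + genMat n (b:ℕ) * Vv φ (k:ℕ) (l:ℕ) a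
      = (2⁻¹ : ℂ) • (OmegaN φ (k:ℕ) (l:ℕ) * (genMat n (b:ℕ) * genMat n (a:ℕ))
          - (genMat n (b:ℕ) * genMat n (a:ℕ)) * OmegaN φ (k:ℕ) (l:ℕ)) := by
    have hb := Omega_comm_ce φ (k:ℕ) (l:ℕ) b
    have ha := Omega_comm_ce φ (k:ℕ) (l:ℕ) a
    have expand : OmegaN φ (k:ℕ) (l:ℕ) * (genMat n (b:ℕ) * genMat n (a:ℕ))
        - (genMat n (b:ℕ) * genMat n (a:ℕ)) * OmegaN φ (k:ℕ) (l:ℕ)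
        = (OmegaN φ (k:ℕ) (l:ℕ) * genMat n (b:ℕ) - genMat n (b:ℕ) * OmegaN φ (k:ℕ) (l:ℕ)) * genMat n (a:ℕ)
          + genMat n (b:ℕ) * (OmegaN φ (k:ℕ) (l:ℕ) * genMat n (a:ℕ) - genMat n (a:ℕ) * OmegaN φ (k:ℕ) (l:ℕ)) := by
      noncomm_ring
    rw [expand, hb, ha, smul_mul_assoc, mul_smul_comm, ← smul_add, smul_smul]
    norm_num
  have step6 : QF φ (kronOp (genMat r (s:ℕ) * genMat r (t:ℕ))
        (Vv φ (k:ℕ) (l:ℕ) b * genMat n (a:ℕ) + genMat n (b:ℕ) * Vv φ (k:ℕ) (l:ℕ) a))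
      = (1/2) * (QF φ (kronOp (genMat r (s:ℕ) * genMat r (t:ℕ))
            (OmegaN φ (k:ℕ) (l:ℕ) * (genMat n (b:ℕ) * genMat n (a:ℕ))))
          - QF φ (kronOp (genMat r (s:ℕ) * genMat r (t:ℕ))
            ((genMat n (b:ℕ) * genMat n (a:ℕ)) * OmegaN φ (k:ℕ) (l:ℕ)))) := by
    rw [step5, show (2⁻¹ : ℂ) = (((2⁻¹ : ℝ)) : ℂ) by norm_num, kron_smul_right, QF_smul,
      kron_sub_right, QF_sub]
    norm_num
  have hcon := constraint φ k l hkl hplus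
  have step7 : QF φ (kronOp (genMat r (s:ℕ) * genMat r (t:ℕ))
        (OmegaN φ (k:ℕ) (l:ℕ) * (genMat n (b:ℕ) * genMat n (a:ℕ))))
      = -QF φ (kronOp ((genMat r (k:ℕ) * genMat r (l:ℕ)) * (genMat r (s:ℕ) * genMat r (t:ℕ)))
          (genMat n (b:ℕ) * genMat n (a:ℕ))) := by
    have h0 : kronOp (genMat r (s:ℕ) * genMat r (t:ℕ))
          (OmegaN φ (k:ℕ) (l:ℕ) * (genMat n (b:ℕ) * genMat n (a:ℕ)))
        = kronOp (1 : Matrix (SpIdx r) (SpIdx r) ℂ) (OmegaN φ (k:ℕ) (l:ℕ))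
          * kronOp (genMat r (s:ℕ) * genMat r (t:ℕ)) (genMat n (b:ℕ) * genMat n (a:ℕ)) := by
      rw [kron_mul, one_mul]
    rw [h0]
    have hadj : (kronOp (1 : Matrix (SpIdx r) (SpIdx r) ℂ) (OmegaN φ (k:ℕ) (l:ℕ)))ᴴ.mulVec φ
        = (kronOp (genMat r (k:ℕ) * genMat r (l:ℕ)) (1 : Matrix (SpIdx n) (SpIdx n) ℂ)).mulVec φ := by
      rw [kron_conjT, Matrix.conjTranspose_one, OmegaN_conjT, kron_neg_right, Matrix.neg_mulVec,
        hcon, neg_neg]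
    rw [QF_move φ _ _ _ hadj, kron_conjT, Matrix.conjTranspose_one,
      Fpair_conjT k l hkl, kron_neg_left, neg_mul, QF_neg, kron_mul, one_mul]
  have step8 : QF φ (kronOp (genMat r (s:ℕ) * genMat r (t:ℕ))
        ((genMat n (b:ℕ) * genMat n (a:ℕ)) * OmegaN φ (k:ℕ) (l:ℕ)))
      = -QF φ (kronOp ((genMat r (s:ℕ) * genMat r (t:ℕ)) * (genMat r (k:ℕ) * genMat r (l:ℕ)))
          (genMat n (b:ℕ) * genMat n (a:ℕ))) := by
    have h0 : kronOp (genMat r (s:ℕ) * genMat r (t:ℕ))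
          ((genMat n (b:ℕ) * genMat n (a:ℕ)) * OmegaN φ (k:ℕ) (l:ℕ))
        = kronOp (genMat r (s:ℕ) * genMat r (t:ℕ)) (genMat n (b:ℕ) * genMat n (a:ℕ))
          * kronOp (1 : Matrix (SpIdx r) (SpIdx r) ℂ) (OmegaN φ (k:ℕ) (l:ℕ)) := by
      rw [kron_mul, mul_one]
    rw [h0, QF_mul_right φ _ _
      (-(kronOp (genMat r (k:ℕ) * genMat r (l:ℕ)) (1 : Matrix (SpIdx n) (SpIdx n) ℂ)))
      (by rw [Matrix.neg_mulVec]; exact hcon), mul_neg, QF_neg, kron_mul, mul_one]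
  have step4 : (∑ m : Fin n, ce φ (s:ℕ) (t:ℕ) m a * ce φ (k:ℕ) (l:ℕ) b m)
      - (∑ m : Fin n, ce φ (k:ℕ) (l:ℕ) m a * ce φ (s:ℕ) (t:ℕ) b m)
      = QF φ (kronOp (genMat r (s:ℕ) * genMat r (t:ℕ))
          (Vv φ (k:ℕ) (l:ℕ) b * genMat n (a:ℕ) + genMat n (b:ℕ) * Vv φ (k:ℕ) (l:ℕ) a)) := by
    rw [hQ1, hQ2, hsum1, hsum2, ← QF_sub, ← kron_sub_right]
    have : (Vv φ (k:ℕ) (l:ℕ) b * genMat n (a:ℕ) + ((ce φ (k:ℕ) (l:ℕ) b a : ℝ) : ℂ) • 1)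
        - (-(genMat n (b:ℕ) * Vv φ (k:ℕ) (l:ℕ) a) + ((ce φ (k:ℕ) (l:ℕ) b a : ℝ) : ℂ) • 1)
        = Vv φ (k:ℕ) (l:ℕ) b * genMat n (a:ℕ) + genMat n (b:ℕ) * Vv φ (k:ℕ) (l:ℕ) a := by
      abel
    rw [this]
  rw [hentry, step4, step6, step7, step8]
  ring

end Core

section Fin2
variable {r n : ℕ} (φ : TwSpinor r n)

lemma move2 {R : Type*} [Ring R] {X B C : R} (hB : X*B = -(B*X)) (hC : X*C = -(C*X)) :
    X*(B*C) = (B*C)*X := by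
  calc X*(B*C) = (X*B)*C := by rw [mul_assoc]
    _ = -(B*(X*C)) := by rw [hB]; simp [mul_assoc]
    _ = -(B*(-(C*X))) := by rw [hC]
    _ = (B*C)*X := by simp [mul_assoc]

lemma Fswap (i j : Fin r) (h : i ≠ j) :
    genMat r (i:ℕ) * genMat r (j:ℕ) = -(genMat r (j:ℕ) * genMat r (i:ℕ)) :=
  genMat_anticomm i.isLt j.isLt (fun hc => h (Fin.ext hc))

lemma F_comm4 (i j k l : Fin r) (hki : k ≠ i) (hkj : k ≠ j) (hli : l ≠ i) (hlj : l ≠ j) :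
    (genMat r (k:ℕ) * genMat r (l:ℕ)) * (genMat r (i:ℕ) * genMat r (j:ℕ))
      = (genMat r (i:ℕ) * genMat r (j:ℕ)) * (genMat r (k:ℕ) * genMat r (l:ℕ)) := by
  have h1 : genMat r (l:ℕ) * (genMat r (i:ℕ) * genMat r (j:ℕ))
      = (genMat r (i:ℕ) * genMat r (j:ℕ)) * genMat r (l:ℕ) :=
    move2 (Fswap l i hli) (Fswap l j hlj)
  have h2 : genMat r (k:ℕ) * (genMat r (i:ℕ) * genMat r (j:ℕ))
      = (genMat r (i:ℕ) * genMat r (j:ℕ)) * genMat r (k:ℕ) :=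
    move2 (Fswap k i hki) (Fswap k j hkj)
  calc (genMat r (k:ℕ) * genMat r (l:ℕ)) * (genMat r (i:ℕ) * genMat r (j:ℕ))
      = genMat r (k:ℕ) * (genMat r (l:ℕ) * (genMat r (i:ℕ) * genMat r (j:ℕ))) := by
        rw [mul_assoc]
    _ = genMat r (k:ℕ) * ((genMat r (i:ℕ) * genMat r (j:ℕ)) * genMat r (l:ℕ)) := by rw [h1]
    _ = (genMat r (k:ℕ) * (genMat r (i:ℕ) * genMat r (j:ℕ))) * genMat r (l:ℕ) := by
        noncomm_ring
    _ = ((genMat r (i:ℕ) * genMat r (j:ℕ)) * genMat r (k:ℕ)) * genMat r (l:ℕ) := by rw [h2]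
    _ = (genMat r (i:ℕ) * genMat r (j:ℕ)) * (genMat r (k:ℕ) * genMat r (l:ℕ)) := by
        rw [mul_assoc]

lemma h1F (i j k : Fin r) :
    (genMat r (i:ℕ) * genMat r (j:ℕ)) * (genMat r (j:ℕ) * genMat r (k:ℕ))
      = -(genMat r (i:ℕ) * genMat r (k:ℕ)) := by
  calc (genMat r (i:ℕ) * genMat r (j:ℕ)) * (genMat r (j:ℕ) * genMat r (k:ℕ))
      = genMat r (i:ℕ) * ((genMat r (j:ℕ) * genMat r (j:ℕ)) * genMat r (k:ℕ)) := by
        rw [mul_assoc, ← mul_assoc (genMat r (j:ℕ))]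
    _ = -(genMat r (i:ℕ) * genMat r (k:ℕ)) := by rw [genMat_sq j.isLt]; simp

lemma h2F (i j k : Fin r) (hij : i ≠ j) (hjk : j ≠ k) (hik : i ≠ k) :
    (genMat r (j:ℕ) * genMat r (k:ℕ)) * (genMat r (i:ℕ) * genMat r (j:ℕ))
      = genMat r (i:ℕ) * genMat r (k:ℕ) := by
  have hk : genMat r (k:ℕ) * (genMat r (i:ℕ) * genMat r (j:ℕ))
      = (genMat r (i:ℕ) * genMat r (j:ℕ)) * genMat r (k:ℕ) :=
    move2 (Fswap k i (Ne.symm hik)) (Fswap k j (Ne.symm hjk))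
  have hji : genMat r (j:ℕ) * (genMat r (i:ℕ) * genMat r (j:ℕ)) = genMat r (i:ℕ) := by
    rw [← mul_assoc, Fswap j i (Ne.symm hij), neg_mul, mul_assoc, genMat_sq j.isLt]
    simp
  calc (genMat r (j:ℕ) * genMat r (k:ℕ)) * (genMat r (i:ℕ) * genMat r (j:ℕ))
      = genMat r (j:ℕ) * (genMat r (k:ℕ) * (genMat r (i:ℕ) * genMat r (j:ℕ))) := by
        rw [mul_assoc]
    _ = genMat r (j:ℕ) * ((genMat r (i:ℕ) * genMat r (j:ℕ)) * genMat r (k:ℕ)) := by rw [hk]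
    _ = (genMat r (j:ℕ) * (genMat r (i:ℕ) * genMat r (j:ℕ))) * genMat r (k:ℕ) := by
        noncomm_ring
    _ = genMat r (i:ℕ) * genMat r (k:ℕ) := by rw [hji]

lemma etaHat_flip (k l : Fin r) (h : k ≠ l) :
    etaHatMat r n φ (l:ℕ) (k:ℕ) = -(etaHatMat r n φ (k:ℕ) (l:ℕ)) := by
  ext a b
  rw [Matrix.neg_apply, etaHatMat_entry, etaHatMat_entry]
  exact eta_flip φ k l h b a

lemma horthQ
    (horth : ∀ k l : Fin r, k < l →
      (inner ℂ (actR (genMat r (k:ℕ) * genMat r (l:ℕ)) φ) φ : ℂ) = 0)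
    (i k : Fin r) (h : i ≠ k) :
    QF φ (kronOp (genMat r (i:ℕ) * genMat r (k:ℕ)) (1 : Matrix (SpIdx n) (SpIdx n) ℂ)) = 0 := by
  rcases h.lt_or_gt with hlt | hlt
  · have h0 := horth i k hlt
    rw [QF, ← actR_eq, h0, Complex.zero_re]
  · have h0 := horth k i hlt
    rw [Fswap i k h, kron_neg_left, QF_neg, QF, ← actR_eq, h0]
    simp

end Fin2

section Fin3
variable {r n : ℕ} (φ : TwSpinor r n)

lemma etaHatExt_eq (k l : Fin r) (h : k ≠ l) :
    etaHatExt r n φ k l = etaHatMat r n φ (k:ℕ) (l:ℕ) := by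
  rw [etaHatExt, if_neg h]
  by_cases hlt : k < l
  · rw [if_pos hlt]
  · rw [if_neg hlt, etaHat_flip φ k l h, neg_neg]


theorem stmt9aux
    (hplus : ∀ k l : Fin r, k < l →
      etaActionM r n (genMat r (k:ℕ) * genMat r (l:ℕ)) φ
        + actR (genMat r (k:ℕ) * genMat r (l:ℕ)) φ = 0)
    (horth : ∀ k l : Fin r, k < l →
      (inner ℂ (actR (genMat r (k:ℕ) * genMat r (l:ℕ)) φ) φ : ℂ) = 0) :
    (∀ i j k l : Fin r, i ≠ j → i ≠ k → i ≠ l → j ≠ k → j ≠ l → k ≠ l →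
      etaHatExt r n φ k l * etaHatExt r n φ i j
          - etaHatExt r n φ i j * etaHatExt r n φ k l = 0) ∧
    (∀ i j k : Fin r, i ≠ j → i ≠ k → j ≠ k →
      etaHatExt r n φ i j * etaHatExt r n φ j k
          - etaHatExt r n φ j k * etaHatExt r n φ i j = -(etaHatExt r n φ i k)) := by
  constructor
  · intro i j k l hij hik hil hjk hjl hkl
    rw [etaHatExt_eq φ k l hkl, etaHatExt_eq φ i j hij]
    ext a b
    rw [Matrix.zero_apply, core φ k l i j hkl hij hplus a b,
      F_comm4 i j k l (Ne.symm hik) (Ne.symm hjk) (Ne.symm hil) (Ne.symm hjl)]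
    ring
  · intro i j k hij hik hjk
    rw [etaHatExt_eq φ i j hij, etaHatExt_eq φ j k hjk, etaHatExt_eq φ i k hik]
    ext a b
    rw [Matrix.neg_apply, core φ i j j k hij hjk hplus a b, h1F i j k,
      h2F i j k hij hjk hik, kron_neg_left, QF_neg, etaHatMat_entry,
      ce_basis φ (i:ℕ) (k:ℕ) b a]
    by_cases hba : b = a
    · simp only [WBm, if_pos hba]
      rw [one_smul, kron_add_right, QF_add, horthQ φ horth i k hik]
      ring
    · simp only [WBm, if_neg hba]
      rw [zero_smul, add_zero]
      ring


end Fin3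
end Stmt9Helper

/-- the endomorphisms η̂_{kl}^φ satisfy the commutation relations of so(r). -/
theorem stmt9 (n r : ℕ) (hr : 2 ≤ r) (φ : TwSpinor r n) (V : Submodule ℝ (Rn n))
    (hpp : IsPartiallyPure r n φ V) :
    (∀ i j k l : Fin r, i ≠ j → i ≠ k → i ≠ l → j ≠ k → j ≠ l → k ≠ l →
      etaHatExt r n φ k l * etaHatExt r n φ i j
          - etaHatExt r n φ i j * etaHatExt r n φ k l = 0) ∧
    (∀ i j k : Fin r, i ≠ j → i ≠ k → j ≠ k →
      etaHatExt r n φ i j * etaHatExt r n φ j k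
          - etaHatExt r n φ j k * etaHatExt r n φ i j = -(etaHatExt r n φ i k)) := by
  exact Stmt9Helper.stmt9aux φ hpp.eta_plus hpp.f_orth
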